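/- arXiv:2111.08269 — 3 statements merged into one kernel-verified Lean document; each statement's English description precedes it below -/
import Mathlib

section
/- Let I be a finite nonempty set of patients and J a finite set of beds, and for each i ∈ I let J_i ⊆ J be a nonempty set of beds allowable for patient i, with J = ⋃_{i∈I} J_i. Let (Ω, F, P) be a probability space and, for each j ∈ J, let d_j : Ω → ℝ be a random variable (the time at which bed j becomes available). Let a : I → ℝ give bed request times and τ : I → ℝ with τ_i > 0 give delay targets, and let u : I × J → ℝ with u_{ij} ≥ 0 give overflow costs. Call an assignment plan z : I × J → {0,1} admissible if z_{ij} = 0 whenever j ∉ J_i, ∑_{j ∈ J_i} z_{ij} = 1 for every i ∈ I, and ∑_{i ∈ I} z_{ij} ≤ 1 for every j ∈ J; assume the set A of admissible plans is nonempty, let B* = min_{z ∈ A} ∑_{i∈I} ∑_{j∈J_i} z_{ij} u_{ij}, and let B ≥ B*, so that the feasible set F(B) = { z ∈ A : ∑_{i∈I} ∑_{j∈J_i} z_{ij} u_{ij} ≤ B } is nonempty. Define the objective W(z) = ∏_{i∈I} ∏_{j∈J_i} P(d_j − a_i ≤ τ_i)^{z_{ij}}. Say patients i and k are of the same type if J_i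 = J_k, τ_i = τ_k, and u_{im} = u_{km} for all m ∈ J_i. Fix t ∈ ℝ and a bed j ∈ J such that d_j = t almost surely, and suppose d_h ≥ t almost surely for every h ∈ J. Then there exists a plan z* maximizing W over F(B) with the following property: if z*_{kj} = 1 for some patient k ∈ I, then a_k ≤ a_ℓ for every patient ℓ ∈ I of the same type as k. -/
open MeasureTheory ProbabilityTheory Finset

/-- An assignment plan `z` (with values in `{0,1}`, encoded as naturals `≤ 1`) is admissible if
patients can only be assigned beds in their allowable sets, every patient is assigned exactly one
bed, and every bed takes at most one patient. -/
def Admissible {I J : Type*} [Fintype I] (Ji : I → Finset J) (z : I → J → ℕ) : Prop :=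
  (∀ i j, z i j ≤ 1) ∧ (∀ i j, j ∉ Ji i → z i j = 0) ∧
    (∀ i, ∑ j ∈ Ji i, z i j = 1) ∧ (∀ j : J, ∑ i, z i j ≤ 1)

/-- Total overflow cost of a plan. -/
def overflowCost {I J : Type*} [Fintype I] (Ji : I → Finset J) (u : I → J → ℝ)
    (z : I → J → ℕ) : ℝ :=
  ∑ i, ∑ j ∈ Ji i, (z i j : ℝ) * u i j

/-- The `P` model objective: the product over assigned patient–bed pairs of the probabilities
that the boarding time `d j - a i` meets the delay target `τ i`. -/
noncomputable def objW {I J Ω : Type*} [Fintype I] [MeasurableSpace Ω] (Ji : I → Finset J)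
    (μ : Measure Ω) (d : J → Ω → ℝ) (a τ : I → ℝ) (z : I → J → ℕ) : ENNReal :=
  ∏ i, ∏ j ∈ Ji i, (μ {ω | d j ω - a i ≤ τ i}) ^ (z i j)

/-- Patients `i` and `k` are of the same type. -/
def SameType {I J : Type*} (Ji : I → Finset J) (τ : I → ℝ) (u : I → J → ℝ) (i k : I) : Prop :=
  Ji i = Ji k ∧ τ i = τ k ∧ ∀ m ∈ Ji i, u i m = u k m

/-- Proposition 1: there is an optimal plan under which the patient assigned to the currently
available bed `j` has the earliest bed request time in his type. -/
theorem exists_optimal_plan_FCFS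
    {I J Ω : Type*} [Fintype I] [Nonempty I] [Fintype J]
    [MeasurableSpace Ω] {μ : Measure Ω} [IsProbabilityMeasure μ]
    (Ji : I → Finset J) (hJiNe : ∀ i, (Ji i).Nonempty)
    (hJcover : ∀ j : J, ∃ i, j ∈ Ji i)
    (d : J → Ω → ℝ) (hd : ∀ j, Measurable (d j))
    (a τ : I → ℝ) (hτ : ∀ i, 0 < τ i)
    (u : I → J → ℝ) (hu : ∀ i j, 0 ≤ u i j)
    (Bstar B : ℝ)
    (hBstar : IsLeast {c : ℝ | ∃ z, Admissible Ji z ∧ overflowCost Ji u z = c} Bstar)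
    (hB : Bstar ≤ B)
    (t : ℝ) (j : J) (hj : ∀ᵐ ω ∂μ, d j ω = t)
    (hall : ∀ h : J, ∀ᵐ ω ∂μ, t ≤ d h ω) :
    ∃ zs : I → J → ℕ,
      (Admissible Ji zs ∧ overflowCost Ji u zs ≤ B) ∧
      (∀ z : I → J → ℕ, Admissible Ji z → overflowCost Ji u z ≤ B →
        objW Ji μ d a τ z ≤ objW Ji μ d a τ zs) ∧
      (∀ k : I, zs k j = 1 → ∀ l : I, SameType Ji τ u k l → a k ≤ a l) := by
  classical
  set S : Set (I → J → ℕ) := {z | Admissible Ji z ∧ overflowCost Ji u z ≤ B} with hSdef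
  have hSne : S.Nonempty := by
    obtain ⟨⟨z0, hz0, hc0⟩, -⟩ := hBstar
    exact ⟨z0, hz0, le_trans (le_of_eq hc0) hB⟩
  have hSfin : S.Finite := by
    have h1 : S ⊆ Set.pi Set.univ (fun _ : I => {g : J → ℕ | ∀ m, g m ≤ 1}) := by
      intro z hz i _
      exact fun m => hz.1.1 i m
    refine Set.Finite.subset (Set.Finite.pi fun i => ?_) h1
    have h2 : {g : J → ℕ | ∀ m, g m ≤ 1} ⊆ Set.pi Set.univ (fun _ : J => Set.Iic 1) := by
      intro g hg m _; exact hg m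
    exact Set.Finite.subset (Set.Finite.pi fun m => Set.finite_Iic 1) h2
  obtain ⟨z, hzS, hzmax'⟩ :=
    Set.Finite.exists_maximalFor (objW Ji μ d a τ) S hSfin hSne
  have hzmax : ∀ w ∈ S, objW Ji μ d a τ w ≤ objW Ji μ d a τ z := by
    intro w hw
    rcases le_total (objW Ji μ d a τ w) (objW Ji μ d a τ z) with h | h
    · exact h
    · exact hzmax' hw h
  by_cases hk : ∃ k, z k j = 1
  · obtain ⟨k, hkj⟩ := hk
    have hadm : Admissible Ji z := hzS.1
    have hjk : j ∈ Ji k := by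
      by_contra hc
      rw [hadm.2.1 k j hc] at hkj
      exact one_ne_zero hkj.symm
    -- choose l of the same type as k with minimal request time
    set T : Finset I := Finset.univ.filter (fun l => SameType Ji τ u k l) with hTdef
    have hkT : k ∈ T := Finset.mem_filter.2 ⟨Finset.mem_univ _, rfl, rfl, fun _ _ => rfl⟩
    obtain ⟨l, hlT, hlmin⟩ := Finset.exists_min_image T a ⟨k, hkT⟩
    have hst : SameType Ji τ u k l := (Finset.mem_filter.1 hlT).2
    have halk : a l ≤ a k := hlmin k hkT
    -- rows of z
    have hrowk : ∀ m, m ≠ j → z k m = 0 := by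
      intro m hm
      by_cases hmem : m ∈ Ji k
      · have hsum : z k j + ∑ m' ∈ (Ji k).erase j, z k m' = 1 := by
          rw [Finset.add_sum_erase _ _ hjk]; exact hadm.2.2.1 k
        have h2 : ∑ m' ∈ (Ji k).erase j, z k m' = 0 := by omega
        exact Finset.sum_eq_zero_iff.1 h2 m (Finset.mem_erase.2 ⟨hm, hmem⟩)
      · exact hadm.2.1 k m hmem
    obtain ⟨m0, hm0mem, hm0ne⟩ : ∃ m0 ∈ Ji l, z l m0 ≠ 0 := by
      by_contra hcon
      push_neg at hcon
      have := hadm.2.2.1 l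
      rw [Finset.sum_eq_zero hcon] at this
      exact absurd this (by omega)
    have hm0one : z l m0 = 1 := le_antisymm (hadm.1 l m0) (Nat.one_le_iff_ne_zero.2 hm0ne)
    have hrowl : ∀ m, m ≠ m0 → z l m = 0 := by
      intro m hm
      by_cases hmem : m ∈ Ji l
      · have hsum : z l m0 + ∑ m' ∈ (Ji l).erase m0, z l m' = 1 := by
          rw [Finset.add_sum_erase _ _ hm0mem]; exact hadm.2.2.1 l
        have h2 : ∑ m' ∈ (Ji l).erase m0, z l m' = 0 := by omega
        exact Finset.sum_eq_zero_iff.1 h2 m (Finset.mem_erase.2 ⟨hm, hmem⟩)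
      · exact hadm.2.1 l m hmem
    have hm0k : m0 ∈ Ji k := hst.1 ▸ hm0mem
    have hjl : j ∈ Ji l := hst.1 ▸ hjk
    -- the swapped plan
    set σ : Equiv.Perm I := Equiv.swap k l with hσdef
    set z' : I → J → ℕ := fun i m => z (σ i) m with hz'def
    have hJis : ∀ i, Ji (σ i) = Ji i := by
      intro i
      rcases eq_or_ne i k with rfl | hik
      · rw [hσdef, Equiv.swap_apply_left]; exact hst.1.symm
      rcases eq_or_ne i l with rfl | hil
      · rw [hσdef, Equiv.swap_apply_right]; exact hst.1
      · rw [hσdef, Equiv.swap_apply_of_ne_of_ne hik hil]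
    have hus : ∀ i, ∀ m ∈ Ji i, u (σ i) m = u i m := by
      intro i m hm
      rcases eq_or_ne i k with rfl | hik
      · rw [hσdef, Equiv.swap_apply_left]; exact (hst.2.2 m hm).symm
      rcases eq_or_ne i l with rfl | hil
      · rw [hσdef, Equiv.swap_apply_right]; exact hst.2.2 m (hst.1 ▸ hm)
      · rw [hσdef, Equiv.swap_apply_of_ne_of_ne hik hil]
    have hadm' : Admissible Ji z' := by
      refine ⟨fun i m => hadm.1 _ m, fun i m hm => hadm.2.1 _ m ((hJis i).symm ▸ hm), ?_, ?_⟩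
      · intro i
        have := hadm.2.2.1 (σ i)
        rw [hJis i] at this
        exact this
      · intro m
        have hc : ∑ i, z' i m = ∑ i, z i m := Equiv.sum_comp σ (fun i => z i m)
        rw [hc]; exact hadm.2.2.2 m
    have hcost' : overflowCost Ji u z' = overflowCost Ji u z := by
      unfold overflowCost
      calc ∑ i, ∑ m ∈ Ji i, (z' i m : ℝ) * u i m
          = ∑ i, ∑ m ∈ Ji (σ i), (z (σ i) m : ℝ) * u (σ i) m := by
            refine Finset.sum_congr rfl fun i _ => ?_
            rw [hJis i]
            exact Finset.sum_congr rfl fun m hm => by rw [hus i m hm]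
        _ = ∑ i, ∑ m ∈ Ji i, (z i m : ℝ) * u i m :=
            Equiv.sum_comp σ (fun i => ∑ m ∈ Ji i, (z i m : ℝ) * u i m)
    -- probability helpers
    have hone : ∀ i : I, t - a i ≤ τ i → μ {ω | d j ω - a i ≤ τ i} = 1 := by
      intro i hi
      have hae : ∀ᵐ ω ∂μ, ω ∈ {ω | d j ω - a i ≤ τ i} :=
        hj.mono fun ω hω => by simp only [Set.mem_setOf_eq, hω]; exact hi
      have heq : {ω | d j ω - a i ≤ τ i} =ᵐ[μ] Set.univ := Filter.eventuallyEq_univ.2 hae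
      rw [measure_congr heq, measure_univ]
    have hzero : ∀ i : I, ∀ m : J, ¬ (t - a i ≤ τ i) → μ {ω | d m ω - a i ≤ τ i} = 0 := by
      intro i m hi
      have hae : ∀ᵐ ω ∂μ, ω ∉ {ω | d m ω - a i ≤ τ i} :=
        (hall m).mono fun ω hω => by
          simp only [Set.mem_setOf_eq]
          intro hle
          exact hi (by linarith)
      exact measure_eq_zero_iff_ae_notMem.2 hae
    -- the objective does not decrease after the swap
    have hW : objW Ji μ d a τ z ≤ objW Ji μ d a τ z' := by
      rcases eq_or_ne l k with rfl | hlk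
      · have hzz : z' = z := by
          funext i m
          rw [hz'def]
          simp [hσdef, Equiv.swap_self]
        rw [hzz]
      · unfold objW
        have hsplit : ∀ f : I → ENNReal,
            ∏ i, f i = f k * (f l * ∏ i ∈ (Finset.univ.erase k).erase l, f i) := by
          intro f
          rw [← Finset.mul_prod_erase _ f (Finset.mem_univ k),
              ← Finset.mul_prod_erase _ f (Finset.mem_erase.2 ⟨hlk, Finset.mem_univ l⟩)]
        rw [hsplit (fun i => ∏ m ∈ Ji i, μ {ω | d m ω - a i ≤ τ i} ^ z i m),
            hsplit (fun i => ∏ m ∈ Ji i, μ {ω | d m ω - a i ≤ τ i} ^ z' i m)]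
        have hR : ∏ i ∈ (Finset.univ.erase k).erase l, ∏ m ∈ Ji i, μ {ω | d m ω - a i ≤ τ i} ^ z' i m
            = ∏ i ∈ (Finset.univ.erase k).erase l, ∏ m ∈ Ji i, μ {ω | d m ω - a i ≤ τ i} ^ z i m := by
          refine Finset.prod_congr rfl fun i hi => ?_
          have hil : i ≠ l := (Finset.mem_erase.1 hi).1
          have hik : i ≠ k := (Finset.mem_erase.1 (Finset.mem_erase.1 hi).2).1
          refine Finset.prod_congr rfl fun m _ => ?_
          rw [hz'def]
          simp only [hσdef, Equiv.swap_apply_of_ne_of_ne hik hil]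
        have hGk : ∏ m ∈ Ji k, μ {ω | d m ω - a k ≤ τ k} ^ z k m
            = μ {ω | d j ω - a k ≤ τ k} := by
          rw [Finset.prod_eq_single_of_mem j hjk
            (fun m _ hne => by rw [hrowk m hne, pow_zero]), hkj, pow_one]
        have hGl : ∏ m ∈ Ji l, μ {ω | d m ω - a l ≤ τ l} ^ z l m
            = μ {ω | d m0 ω - a l ≤ τ l} := by
          rw [Finset.prod_eq_single_of_mem m0 hm0mem
            (fun m _ hne => by rw [hrowl m hne, pow_zero]), hm0one, pow_one]
        have hz'k : ∀ m, z' k m = z l m := fun m => by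
          rw [hz'def]; simp only [hσdef, Equiv.swap_apply_left]
        have hz'l : ∀ m, z' l m = z k m := fun m => by
          rw [hz'def]; simp only [hσdef, Equiv.swap_apply_right]
        have hFk : ∏ m ∈ Ji k, μ {ω | d m ω - a k ≤ τ k} ^ z' k m
            = μ {ω | d m0 ω - a k ≤ τ k} := by
          rw [Finset.prod_eq_single_of_mem m0 hm0k
            (fun m _ hne => by rw [hz'k m, hrowl m hne, pow_zero]), hz'k m0, hm0one, pow_one]
        have hFl : ∏ m ∈ Ji l, μ {ω | d m ω - a l ≤ τ l} ^ z' l m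
            = μ {ω | d j ω - a l ≤ τ l} := by
          rw [Finset.prod_eq_single_of_mem j hjl
            (fun m _ hne => by rw [hz'l m, hrowk m hne, pow_zero]), hz'l j, hkj, pow_one]
        simp only [hGk, hGl, hFk, hFl, hR]
        have hkey : μ {ω | d j ω - a k ≤ τ k} * μ {ω | d m0 ω - a l ≤ τ l}
            ≤ μ {ω | d m0 ω - a k ≤ τ k} * μ {ω | d j ω - a l ≤ τ l} := by
          by_cases hc : t - a l ≤ τ l
          · have hc2 : t - a k ≤ τ k := by
              have := hst.2.1
              linarith
            rw [hone l hc, hone k hc2, one_mul, mul_one]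
            refine measure_mono fun ω hω => ?_
            simp only [Set.mem_setOf_eq] at hω ⊢
            have := hst.2.1
            linarith
          · rw [hzero l m0 hc, mul_zero]
            exact zero_le
        calc μ {ω | d j ω - a k ≤ τ k} * (μ {ω | d m0 ω - a l ≤ τ l}
              * ∏ i ∈ (Finset.univ.erase k).erase l, ∏ m ∈ Ji i, μ {ω | d m ω - a i ≤ τ i} ^ z i m)
            = (μ {ω | d j ω - a k ≤ τ k} * μ {ω | d m0 ω - a l ≤ τ l})
              * ∏ i ∈ (Finset.univ.erase k).erase l, ∏ m ∈ Ji i, μ {ω | d m ω - a i ≤ τ i} ^ z i m := by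
              ring
          _ ≤ (μ {ω | d m0 ω - a k ≤ τ k} * μ {ω | d j ω - a l ≤ τ l})
              * ∏ i ∈ (Finset.univ.erase k).erase l, ∏ m ∈ Ji i, μ {ω | d m ω - a i ≤ τ i} ^ z i m :=
              mul_le_mul_left hkey _
          _ = μ {ω | d m0 ω - a k ≤ τ k} * (μ {ω | d j ω - a l ≤ τ l}
              * ∏ i ∈ (Finset.univ.erase k).erase l, ∏ m ∈ Ji i, μ {ω | d m ω - a i ≤ τ i} ^ z i m) := by
              ring
    refine ⟨z', ⟨hadm', by rw [hcost']; exact hzS.2⟩, ?_, ?_⟩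
    · intro w hw hc
      exact le_trans (hzmax w ⟨hw, hc⟩) hW
    · intro k' hk' l' hll'
      have hz'lj : z' l j = 1 := by
        rw [hz'def]; simp only [hσdef, Equiv.swap_apply_right]; exact hkj
      have hk'l : k' = l := by
        by_contra hne
        have h2 : z' k' j + z' l j ≤ ∑ i, z' i j := by
          have hsub : ({k', l} : Finset I).sum (fun i => z' i j) ≤ ∑ i, z' i j :=
            Finset.sum_le_sum_of_subset (Finset.subset_univ _)
          rwa [Finset.sum_pair hne] at hsub
        have h3 := hadm'.2.2.2 j
        omega
      subst hk'l
      refine hlmin l' (Finset.mem_filter.2 ⟨Finset.mem_univ _, ?_⟩)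
      exact ⟨hst.1.trans hll'.1, hst.2.1.trans hll'.2.1,
        fun m hm => (hst.2.2 m hm).trans (hll'.2.2 m (hst.1 ▸ hm))⟩
  · refine ⟨z, ⟨hzS.1, hzS.2⟩, fun w hw hc => hzmax w ⟨hw, hc⟩, fun k hk1 => absurd ⟨k, hk1⟩ hk⟩
end

section
/- Let (Ω, F, P) be a probability space, let t ∈ ℝ, and let d_j, d_h : Ω → ℝ be random variables with d_j = t almost surely and d_h ≥ t almost surely. Let a_ℓ, a_k, τ ∈ ℝ with a_ℓ ≤ a_k. Then P(d_j − a_ℓ ≤ τ) · P(d_h − a_k ≤ τ) ≥ P(d_j − a_k ≤ τ) · P(d_h − a_ℓ ≤ τ). -/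
open MeasureTheory

/-- The key exchange inequality: if bed `j` is available now (at time `t`) and bed `h` becomes
available no earlier than `t`, then giving the currently available bed to the patient with the
earlier request time does not decrease the product of target-attainment probabilities. -/
theorem exchange_inequality
    {Ω : Type*} [MeasurableSpace Ω] {μ : Measure Ω} [IsProbabilityMeasure μ]
    (t : ℝ) (dj dh : Ω → ℝ) (hdj : Measurable dj) (hdh : Measurable dh)
    (hj : ∀ᵐ ω ∂μ, dj ω = t) (hh : ∀ᵐ ω ∂μ, t ≤ dh ω)
    (aℓ ak τ : ℝ) (hle : aℓ ≤ ak) :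
    μ {ω | dj ω - ak ≤ τ} * μ {ω | dh ω - aℓ ≤ τ} ≤
      μ {ω | dj ω - aℓ ≤ τ} * μ {ω | dh ω - ak ≤ τ} := by
  by_cases hcase : t - aℓ ≤ τ
  · -- Case 1: t - aℓ ≤ τ, so μ {dj - aℓ ≤ τ} = 1.
    have h1 : μ {ω | dj ω - aℓ ≤ τ} = 1 := by
      rw [← measure_univ (μ := μ)]
      refine measure_congr (Filter.eventuallyEq_univ.mpr ?_)
      filter_upwards [hj] with ω hω
      simp only [Set.mem_setOf_eq, hω]
      exact hcase
    rw [h1, one_mul]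
    have hmono : μ {ω | dh ω - aℓ ≤ τ} ≤ μ {ω | dh ω - ak ≤ τ} :=
      measure_mono fun ω hω => by simp only [Set.mem_setOf_eq] at hω ⊢; linarith
    calc μ {ω | dj ω - ak ≤ τ} * μ {ω | dh ω - aℓ ≤ τ} ≤ 1 * μ {ω | dh ω - ak ≤ τ} := mul_le_mul' prob_le_one hmono
      _ = μ {ω | dh ω - ak ≤ τ} := one_mul _
  · -- Case 2: t - aℓ > τ, so μ {dh - aℓ ≤ τ} = 0.
    push_neg at hcase
    have h0 : μ {ω | dh ω - aℓ ≤ τ} = 0 := by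
      rw [measure_eq_zero_iff_ae_notMem]
      filter_upwards [hh] with ω hω
      simp only [Set.mem_setOf_eq, not_le]
      linarith
    rw [h0, mul_zero]
    exact zero_le
end

section
/- Let I be a finite nonempty set of patients and J a finite set of beds, and for each i ∈ I let J_i ⊆ J be a nonempty set of beds allowable for patient i, with J = ⋃_{i∈I} J_i. Let (Ω, F, P) be a probability space with random variables d_j : Ω → ℝ for j ∈ J, let a : I → ℝ, τ : I → ℝ with τ_i > 0, u : I × J → ℝ with u_{ij} ≥ 0, and B ∈ ℝ, and define the feasible set F(B) of plans z : I × J → {0,1} that are admissible (z_{ij} = 0 for j ∉ J_i, ∑_{j∈J_i} z_{ij} = 1 for each i, ∑_{i∈I} z_{ij} ≤ 1 for each j) and satisfy ∑_{i∈I} ∑_{j∈J_i} z_{ij} u_{ij} ≤ B. Define W(z) = ∏_{i∈I} ∏_{j∈J_i} P(d_j − a_i ≤ τ_i)^{z_{ij}}. Fix t ∈ ℝ, suppose d_h ≥ t almost surely for all h ∈ J, and fix a bed j ∈ J with d_j = t almost surely. Suppose ẑ maximizes W over F(B), that ẑ_{kj} = 1 for a patient k, and that ℓ ∈ I is a patient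 of the same type as k (J_ℓ = J_k, τ_ℓ = τ_k, u_{ℓm} = u_{km} for all m ∈ J_k) with a_ℓ ≤ a_k, assigned under ẑ to a bed h (ẑ_{ℓh} = 1). Then the plan z* obtained from ẑ by setting z*_{kh} = 1, z*_{ℓj} = 1, z*_{kj} = 0, z*_{ℓh} = 0, and z*_{im} = ẑ_{im} otherwise, also maximizes W over F(B). -/
open MeasureTheory ProbabilityTheory Finset

/-- The plan obtained from `zhat` by switching the beds `j` and `h` of patients `k` and `l`. -/
def swapPlan {I J : Type*} [DecidableEq I] [DecidableEq J]
    (zhat : I → J → ℕ) (k l : I) (j h : J) : I → J → ℕ :=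
  fun i m =>
    if (i = k ∧ m = h) ∨ (i = l ∧ m = j) then 1
    else if (i = k ∧ m = j) ∨ (i = l ∧ m = h) then 0
    else zhat i m

/-- Switching the beds of a same-type pair, so that the earlier-requesting patient receives the
currently available bed, preserves optimality of the `P` model. -/
theorem swap_preserves_optimality
    {I J Ω : Type*} [Fintype I] [Nonempty I] [Fintype J] [DecidableEq I] [DecidableEq J]
    [MeasurableSpace Ω] {μ : Measure Ω} [IsProbabilityMeasure μ]
    (Ji : I → Finset J) (hJiNe : ∀ i, (Ji i).Nonempty)
    (hJcover : ∀ j : J, ∃ i, j ∈ Ji i)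
    (d : J → Ω → ℝ) (hd : ∀ j, Measurable (d j))
    (a τ : I → ℝ) (hτ : ∀ i, 0 < τ i)
    (u : I → J → ℝ) (hu : ∀ i j, 0 ≤ u i j) (B : ℝ)
    (t : ℝ) (hall : ∀ h : J, ∀ᵐ ω ∂μ, t ≤ d h ω)
    (j : J) (hj : ∀ᵐ ω ∂μ, d j ω = t)
    (zhat : I → J → ℕ)
    (hadm : Admissible Ji zhat) (hcost : overflowCost Ji u zhat ≤ B)
    (hmax : ∀ z : I → J → ℕ, Admissible Ji z → overflowCost Ji u z ≤ B →
      objW Ji μ d a τ z ≤ objW Ji μ d a τ zhat)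
    (k : I) (hkj : zhat k j = 1)
    (l : I) (hst : SameType Ji τ u k l) (hal : a l ≤ a k)
    (h : J) (hlh : zhat l h = 1) :
    Admissible Ji (swapPlan zhat k l j h) ∧
      overflowCost Ji u (swapPlan zhat k l j h) ≤ B ∧
      ∀ z : I → J → ℕ, Admissible Ji z → overflowCost Ji u z ≤ B →
        objW Ji μ d a τ z ≤ objW Ji μ d a τ (swapPlan zhat k l j h) := by
  classical
  obtain ⟨h01, hJz, hrow, hcol⟩ := hadm
  obtain ⟨hJeq, hτeq, hueq⟩ := hst
  have hjk : j ∈ Ji k := by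
    by_contra hc; simp [hJz k j hc] at hkj
  have hhl : h ∈ Ji l := by
    by_contra hc; simp [hJz l h hc] at hlh
  have hhk : h ∈ Ji k := hJeq ▸ hhl
  have hjl : j ∈ Ji l := hJeq ▸ hjk
  by_cases hkl : k = l
  · -- degenerate case: same patient, so same bed and the swap is trivial
    subst hkl
    have hjh : j = h := by
      by_contra hne
      have hsub : ({j, h} : Finset J) ⊆ Ji k := by
        intro x hx; simp only [Finset.mem_insert, Finset.mem_singleton] at hx
        rcases hx with rfl | rfl
        · exact hjk
        · exact hhl
      have h2 : zhat k j + zhat k h ≤ ∑ m ∈ Ji k, zhat k m := by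
        have := Finset.sum_le_sum_of_subset (f := zhat k) hsub
        simpa [Finset.sum_pair hne] using this
      rw [hrow k, hkj, hlh] at h2; omega
    subst hjh
    have heq : swapPlan zhat k k j j = zhat := by
      funext i m
      by_cases h1 : i = k ∧ m = j
      · obtain ⟨rfl, rfl⟩ := h1; simp [swapPlan, hkj]
      · simp [swapPlan, h1]
    rw [heq]
    exact ⟨⟨h01, hJz, hrow, hcol⟩, hcost, hmax⟩
  · -- main case : k ≠ l
    have hjh : j ≠ h := by
      rintro rfl
      have hsub : ({k, l} : Finset I) ⊆ Finset.univ := Finset.subset_univ _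
      have h2 : zhat k j + zhat l j ≤ ∑ i, zhat i j := by
        have := Finset.sum_le_sum_of_subset (f := fun i => zhat i j) hsub
        simpa [Finset.sum_pair hkl] using this
      have := hcol j; omega
    have hlmem : l ∈ Finset.univ.erase k :=
      Finset.mem_erase.2 ⟨Ne.symm hkl, Finset.mem_univ l⟩
    -- zeros of zhat
    have hrowk : ∀ m ∈ Ji k, m ≠ j → zhat k m = 0 := by
      intro m hm hmj
      have hs := hrow k
      rw [← Finset.add_sum_erase _ _ hjk, hkj] at hs
      have h0 : ∀ x ∈ (Ji k).erase j, zhat k x = 0 := Finset.sum_eq_zero_iff.1 (by omega)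
      exact h0 m (Finset.mem_erase.2 ⟨hmj, hm⟩)
    have hrowl : ∀ m ∈ Ji l, m ≠ h → zhat l m = 0 := by
      intro m hm hmh
      have hs := hrow l
      rw [← Finset.add_sum_erase _ _ hhl, hlh] at hs
      have h0 : ∀ x ∈ (Ji l).erase h, zhat l x = 0 := Finset.sum_eq_zero_iff.1 (by omega)
      exact h0 m (Finset.mem_erase.2 ⟨hmh, hm⟩)
    have hcolj : ∀ i, i ≠ k → zhat i j = 0 := by
      intro i hik
      have hs := hcol j
      rw [← Finset.add_sum_erase _ _ (Finset.mem_univ k), hkj] at hs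
      have h0 : ∀ x ∈ Finset.univ.erase k, zhat x j = 0 := Finset.sum_eq_zero_iff.1 (by omega)
      exact h0 i (Finset.mem_erase.2 ⟨hik, Finset.mem_univ i⟩)
    have hcolh : ∀ i, i ≠ l → zhat i h = 0 := by
      intro i hil
      have hs := hcol h
      rw [← Finset.add_sum_erase _ _ (Finset.mem_univ l), hlh] at hs
      have h0 : ∀ x ∈ Finset.univ.erase l, zhat x h = 0 := Finset.sum_eq_zero_iff.1 (by omega)
      exact h0 i (Finset.mem_erase.2 ⟨hil, Finset.mem_univ i⟩)
    set zs := swapPlan zhat k l j h with hzs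
    have s_kh : zs k h = 1 := by simp [hzs, swapPlan]
    have s_lj : zs l j = 1 := by simp [hzs, swapPlan]
    have s_kj : zs k j = 0 := by simp [hzs, swapPlan, hjh, hkl]
    have s_lh : zs l h = 0 := by simp [hzs, swapPlan, Ne.symm hjh, Ne.symm hkl]
    have s_row : ∀ i, i ≠ k → i ≠ l → ∀ m, zs i m = zhat i m := by
      intro i hik hil m; simp [hzs, swapPlan, hik, hil]
    have s_col : ∀ m, m ≠ j → m ≠ h → ∀ i, zs i m = zhat i m := by
      intro m hmj hmh i; simp [hzs, swapPlan, hmj, hmh]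
    -- admissibility of the swapped plan
    have hadm' : Admissible Ji zs := by
      refine ⟨?_, ?_, ?_, ?_⟩
      · intro i m
        simp only [hzs, swapPlan]
        split_ifs
        · exact le_refl 1
        · exact Nat.zero_le 1
        · exact h01 i m
      · intro i m hm
        have hC1 : ¬((i = k ∧ m = h) ∨ (i = l ∧ m = j)) := by
          rintro (⟨rfl, rfl⟩ | ⟨rfl, rfl⟩)
          · exact hm hhk
          · exact hm hjl
        simp only [hzs, swapPlan, if_neg hC1]
        split_ifs with h2
        · rfl
        · exact hJz i m hm
      · intro i
        by_cases hik : i = k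
        · rw [hik]
          have hs : ∑ m ∈ Ji k, zs k m = zs k h := by
            refine Finset.sum_eq_single_of_mem h hhk ?_
            intro m hm hmh
            by_cases hmj : m = j
            · subst hmj; exact s_kj
            · rw [s_col m hmj hmh]; exact hrowk m hm hmj
          rw [hs, s_kh]
        · by_cases hil : i = l
          · rw [hil]
            have hs : ∑ m ∈ Ji l, zs l m = zs l j := by
              refine Finset.sum_eq_single_of_mem j hjl ?_
              intro m hm hmj
              by_cases hmh : m = h
              · subst hmh; exact s_lh
              · rw [s_col m hmj hmh]; exact hrowl m hm hmh
            rw [hs, s_lj]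
          · rw [Finset.sum_congr rfl fun m _ => s_row i hik hil m]
            exact hrow i
      · intro m
        by_cases hmj : m = j
        · rw [hmj]
          have hs : ∑ i, zs i j = zs l j := by
            refine Finset.sum_eq_single_of_mem l (Finset.mem_univ l) ?_
            intro i _ hil
            by_cases hik : i = k
            · subst hik; exact s_kj
            · rw [s_row i hik hil]; exact hcolj i hik
          rw [hs, s_lj]
        · by_cases hmh : m = h
          · rw [hmh]
            have hs : ∑ i, zs i h = zs k h := by
              refine Finset.sum_eq_single_of_mem k (Finset.mem_univ k) ?_
              intro i _ hik
              by_cases hil : i = l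
              · subst hil; exact s_lh
              · rw [s_row i hik hil]; exact hcolh i hil
            rw [hs, s_kh]
          · rw [Finset.sum_congr rfl fun i _ => s_col m hmj hmh i]
            exact hcol m
    -- costs
    have decompS : ∀ f : I → ℝ,
        ∑ i, f i = f k + (f l + ∑ i ∈ (Finset.univ.erase k).erase l, f i) := by
      intro f
      rw [← Finset.add_sum_erase _ f (Finset.mem_univ k), ← Finset.add_sum_erase _ f hlmem]
    have rowCostk : ∑ m ∈ Ji k, (zhat k m : ℝ) * u k m = u k j := by
      rw [Finset.sum_eq_single_of_mem j hjk fun m hm hmj => by rw [hrowk m hm hmj]; simp, hkj]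
      simp
    have rowCostl : ∑ m ∈ Ji l, (zhat l m : ℝ) * u l m = u l h := by
      rw [Finset.sum_eq_single_of_mem h hhl fun m hm hmh => by rw [hrowl m hm hmh]; simp, hlh]
      simp
    have rowCostk' : ∑ m ∈ Ji k, (zs k m : ℝ) * u k m = u k h := by
      rw [Finset.sum_eq_single_of_mem h hhk ?_, s_kh]
      · simp
      · intro m hm hmh
        by_cases hmj : m = j
        · subst hmj; rw [s_kj]; simp
        · rw [s_col m hmj hmh, hrowk m hm hmj]; simp
    have rowCostl' : ∑ m ∈ Ji l, (zs l m : ℝ) * u l m = u l j := by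
      rw [Finset.sum_eq_single_of_mem j hjl ?_, s_lj]
      · simp
      · intro m hm hmj
        by_cases hmh : m = h
        · subst hmh; rw [s_lh]; simp
        · rw [s_col m hmj hmh, hrowl m hm hmh]; simp
    have costeq : overflowCost Ji u zs = overflowCost Ji u zhat := by
      unfold overflowCost
      rw [decompS, decompS (fun i => ∑ m ∈ Ji i, (zhat i m : ℝ) * u i m)]
      have tail : ∀ i ∈ (Finset.univ.erase k).erase l,
          ∑ m ∈ Ji i, (zs i m : ℝ) * u i m = ∑ m ∈ Ji i, (zhat i m : ℝ) * u i m := by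
        intro i hi
        simp only [Finset.mem_erase] at hi
        exact Finset.sum_congr rfl fun m _ => by rw [s_row i hi.2.1 hi.1]
      rw [Finset.sum_congr rfl tail, rowCostk, rowCostl, rowCostk', rowCostl',
        ← hueq j hjk, ← hueq h hhk]
      ring
    -- objective comparison
    have key : μ {ω | d j ω - a k ≤ τ k} * μ {ω | d h ω - a l ≤ τ l} ≤
        μ {ω | d h ω - a k ≤ τ k} * μ {ω | d j ω - a l ≤ τ l} := by
      by_cases hc : t - a l ≤ τ l
      · have h1 : μ {ω | d j ω - a l ≤ τ l} = 1 := by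
          have hae : {ω | d j ω - a l ≤ τ l} =ᵐ[μ] Set.univ := by
            rw [Filter.eventuallyEq_univ]
            refine Filter.eventually_iff.1 ?_
            filter_upwards [hj] with ω hω
            simp only [Set.mem_setOf_eq, hω]
            linarith
          rw [measure_congr hae, measure_univ]
        have h2 : μ {ω | d h ω - a l ≤ τ l} ≤ μ {ω | d h ω - a k ≤ τ k} := by
          apply measure_mono
          intro ω hω
          simp only [Set.mem_setOf_eq] at *
          linarith [hτeq]
        calc μ {ω | d j ω - a k ≤ τ k} * μ {ω | d h ω - a l ≤ τ l}
            ≤ 1 * μ {ω | d h ω - a k ≤ τ k} := mul_le_mul' prob_le_one h2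
          _ = μ {ω | d h ω - a k ≤ τ k} * μ {ω | d j ω - a l ≤ τ l} := by
              rw [h1, one_mul, mul_one]
      · have h0 : μ {ω | d h ω - a l ≤ τ l} = 0 := by
          rw [measure_eq_zero_iff_ae_notMem]
          filter_upwards [hall h] with ω hω
          intro hmem
          exact hc (by linarith)
        rw [h0, mul_zero]
        exact zero_le
    have rowProdk : ∏ m ∈ Ji k, μ {ω | d m ω - a k ≤ τ k} ^ zhat k m
        = μ {ω | d j ω - a k ≤ τ k} := by
      rw [Finset.prod_eq_single_of_mem j hjk fun m hm hmj => by
        rw [hrowk m hm hmj, pow_zero], hkj, pow_one]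
    have rowProdl : ∏ m ∈ Ji l, μ {ω | d m ω - a l ≤ τ l} ^ zhat l m
        = μ {ω | d h ω - a l ≤ τ l} := by
      rw [Finset.prod_eq_single_of_mem h hhl fun m hm hmh => by
        rw [hrowl m hm hmh, pow_zero], hlh, pow_one]
    have rowProdk' : ∏ m ∈ Ji k, μ {ω | d m ω - a k ≤ τ k} ^ zs k m
        = μ {ω | d h ω - a k ≤ τ k} := by
      rw [Finset.prod_eq_single_of_mem h hhk ?_, s_kh, pow_one]
      intro m hm hmh
      by_cases hmj : m = j
      · subst hmj; rw [s_kj, pow_zero]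
      · rw [s_col m hmj hmh, hrowk m hm hmj, pow_zero]
    have rowProdl' : ∏ m ∈ Ji l, μ {ω | d m ω - a l ≤ τ l} ^ zs l m
        = μ {ω | d j ω - a l ≤ τ l} := by
      rw [Finset.prod_eq_single_of_mem j hjl ?_, s_lj, pow_one]
      intro m hm hmj
      by_cases hmh : m = h
      · subst hmh; rw [s_lh, pow_zero]
      · rw [s_col m hmj hmh, hrowl m hm hmh, pow_zero]
    have decompP : ∀ f : I → ENNReal,
        ∏ i, f i = f k * (f l * ∏ i ∈ (Finset.univ.erase k).erase l, f i) := by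
      intro f
      rw [← Finset.mul_prod_erase _ f (Finset.mem_univ k), ← Finset.mul_prod_erase _ f hlmem]
    have objle : objW Ji μ d a τ zhat ≤ objW Ji μ d a τ zs := by
      unfold objW
      rw [decompP, decompP (fun i => ∏ m ∈ Ji i, μ {ω | d m ω - a i ≤ τ i} ^ zs i m)]
      have tail : ∀ i ∈ (Finset.univ.erase k).erase l,
          ∏ m ∈ Ji i, μ {ω | d m ω - a i ≤ τ i} ^ zs i m
            = ∏ m ∈ Ji i, μ {ω | d m ω - a i ≤ τ i} ^ zhat i m := by
        intro i hi
        simp only [Finset.mem_erase] at hi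
        exact Finset.prod_congr rfl fun m _ => by rw [s_row i hi.2.1 hi.1]
      rw [Finset.prod_congr rfl tail, rowProdk, rowProdl, rowProdk', rowProdl',
        ← mul_assoc, ← mul_assoc]
      exact mul_le_mul_left key _
    exact ⟨hadm', costeq.le.trans hcost, fun z hz hzc => (hmax z hz hzc).trans objle⟩
end
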